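/- arXiv:1601.05156 — 7 statements merged into one kernel-verified Lean document; each statement's English description precedes it below -/
import Mathlib

section
/- For every real s > 0, the integral over the unit interval ∫₀¹ σ^(−3/2) (1−σ)^(−1/2) exp(−s/(2σ)) dσ equals √(2π/s) · exp(−s/2). (This is the computation showing that the random measure obtained by marking a Poisson process with intensity α σ^(−1)(1−σ)^(−1/2) on (0,1) by squared positive parts of standard Gaussians has marginal Lévy intensity proportional to exp(−s/2)/s, i.e. is a Gamma process.) -/
open MeasureTheory Real

/-- For every real `s > 0`,
`∫₀¹ σ^(−3/2) (1−σ)^(−1/2) exp(−s/(2σ)) dσ = √(2π/s) · exp(−s/2)`. -/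
theorem stmt0 (s : ℝ) (hs : 0 < s) :
    ∫ σ in Set.Ioo (0:ℝ) 1,
        σ ^ (-(3:ℝ)/2) * (1 - σ) ^ (-(1:ℝ)/2) * Real.exp (-s / (2 * σ)) =
      Real.sqrt (2 * Real.pi / s) * Real.exp (-s / 2) := by
  set f : ℝ → ℝ := fun t => (1 + t ^ 2)⁻¹ with hf
  have himg : f '' Set.Ioi 0 = Set.Ioo (0:ℝ) 1 := by
    ext σ
    constructor
    · rintro ⟨t, ht, rfl⟩
      have ht0 : (0:ℝ) < t := ht
      have h1 : (1:ℝ) < 1 + t ^ 2 := by nlinarith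
      refine ⟨inv_pos.2 (by linarith), ?_⟩
      rw [inv_lt_one_iff₀]
      right; exact h1
    · rintro ⟨h0, h1⟩
      have hσ : 0 < 1 / σ - 1 := by
        have : 1 < 1 / σ := (one_lt_div h0).2 h1
        linarith
      refine ⟨Real.sqrt (1 / σ - 1), Real.sqrt_pos.2 hσ, ?_⟩
      have : Real.sqrt (1 / σ - 1) ^ 2 = 1 / σ - 1 := Real.sq_sqrt hσ.le
      simp only [hf, this]
      field_simp
      ring
  have hderiv : ∀ t ∈ Set.Ioi (0:ℝ),
      HasDerivWithinAt f (-(2 * t) / (1 + t ^ 2) ^ 2) (Set.Ioi 0) t := by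
    intro t ht
    have h1 : HasDerivAt (fun t : ℝ => 1 + t ^ 2) (2 * t) t := by
      simpa using (hasDerivAt_pow 2 t).const_add 1
    have hne : (1 : ℝ) + t ^ 2 ≠ 0 := by positivity
    exact (h1.inv hne).hasDerivWithinAt
  have hinj : Set.InjOn f (Set.Ioi 0) := by
    intro a ha b hb hab
    have ha0 : (0:ℝ) < a := ha
    have hb0 : (0:ℝ) < b := hb
    have ha' : (1:ℝ) + a ^ 2 ≠ 0 := by positivity
    have hb' : (1:ℝ) + b ^ 2 ≠ 0 := by positivity
    have : (1:ℝ) + a ^ 2 = 1 + b ^ 2 := by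
      simpa [hf] using (inv_inj.mp hab)
    nlinarith
  have hcov := MeasureTheory.integral_image_eq_integral_abs_deriv_smul
    measurableSet_Ioi hderiv hinj
    (fun σ => σ ^ (-(3:ℝ)/2) * (1 - σ) ^ (-(1:ℝ)/2) * Real.exp (-s / (2 * σ)))
  rw [← himg, hcov]
  have hpt : ∀ t ∈ Set.Ioi (0:ℝ),
      |-(2 * t) / (1 + t ^ 2) ^ 2| •
        ((f t) ^ (-(3:ℝ)/2) * (1 - f t) ^ (-(1:ℝ)/2) * Real.exp (-s / (2 * f t)))
      = 2 * Real.exp (-s / 2) * Real.exp (-(s / 2) * t ^ 2) := by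
    intro t ht
    have ht0 : (0:ℝ) < t := ht
    have hb : (0:ℝ) < 1 + t ^ 2 := by positivity
    have habs : |-(2 * t) / (1 + t ^ 2) ^ 2| = 2 * t / (1 + t ^ 2) ^ 2 := by
      rw [abs_div, abs_neg, abs_of_pos (by positivity), abs_of_pos (by positivity)]
    have ht0' : t ≠ 0 := ne_of_gt ht0
    have h1 : (f t) ^ (-(3:ℝ)/2) = (1 + t ^ 2) ^ ((3:ℝ)/2) := by
      rw [show f t = (1 + t ^ 2)⁻¹ from rfl, Real.inv_rpow hb.le, ← Real.rpow_neg hb.le]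
      norm_num
    have hy : (0:ℝ) < (1 + t ^ 2) ^ ((1:ℝ)/2) := Real.rpow_pos_of_pos hb _
    have h2 : (1 - f t) ^ (-(1:ℝ)/2) = (1 + t ^ 2) ^ ((1:ℝ)/2) / t := by
      have hft : 1 - f t = t ^ 2 / (1 + t ^ 2) := by
        simp only [hf]; field_simp
        ring
      rw [hft, Real.div_rpow (sq_nonneg t) hb.le,
        show (-(1:ℝ)/2) = -((1:ℝ)/2) by ring,
        Real.rpow_neg hb.le,
        ← Real.rpow_natCast t 2, ← Real.rpow_mul ht0.le]
      norm_num
      rw [Real.rpow_neg_one]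
      field_simp
    have h3 : Real.exp (-s / (2 * f t)) = Real.exp (-s / 2) * Real.exp (-(s / 2) * t ^ 2) := by
      rw [← Real.exp_add]
      congr 1
      simp only [hf]
      field_simp
      ring
    have key : (1 + t ^ 2) ^ ((3:ℝ)/2) * (1 + t ^ 2) ^ ((1:ℝ)/2) = (1 + t ^ 2) ^ 2 := by
      rw [← Real.rpow_add hb, show (3:ℝ)/2 + 1/2 = ((2:ℕ):ℝ) by norm_num,
        Real.rpow_natCast]
    rw [smul_eq_mul, habs, h1, h2, h3]
    have hb2 : ((1:ℝ) + t ^ 2) ^ 2 ≠ 0 := by positivity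
    field_simp
    rw [key]
  rw [MeasureTheory.setIntegral_congr_fun measurableSet_Ioi hpt]
  rw [MeasureTheory.integral_const_mul]
  rw [integral_gaussian_Ioi (s / 2)]
  rw [mul_comm]
  have : Real.pi / (s / 2) = 2 * Real.pi / s := by
    field_simp
  rw [this]
  ring
end

section
/- For every β ∈ [0,1) and every real s > 0, ∫₀¹ σ^(−3/2−β) (1−σ)^(−1/2+β) exp(−s/(2σ)) dσ = Γ(1/2+β) · 2^(1/2+β) · s^(−1/2−β) · exp(−s/2), where Γ is the Gamma function. (This shows that replacing the Poisson intensity by α σ^(−1−β)(1−σ)^(−1/2+β) yields a marginal Lévy intensity proportional to s^(−1−β) exp(−s/2), i.e. a generalized Gamma process.) -/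
open MeasureTheory Real

/-- For every `β ∈ [0,1)` and `s > 0`,
`∫₀¹ σ^(−3/2−β) (1−σ)^(−1/2+β) exp(−s/(2σ)) dσ
  = Γ(1/2+β) · 2^(1/2+β) · s^(−1/2−β) · exp(−s/2)`. -/
theorem stmt1 (β s : ℝ) (hβ0 : 0 ≤ β) (hβ1 : β < 1) (hs : 0 < s) :
    ∫ σ in Set.Ioo (0:ℝ) 1,
        σ ^ (-(3:ℝ)/2 - β) * (1 - σ) ^ (-(1:ℝ)/2 + β) * Real.exp (-s / (2 * σ)) =
      Real.Gamma (1/2 + β) * (2:ℝ) ^ ((1:ℝ)/2 + β) * s ^ (-(1:ℝ)/2 - β) *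
        Real.exp (-s / 2) := by
  have hs2 : (0:ℝ) < s / 2 := by linarith
  have ha : (0:ℝ) < β + 1/2 := by linarith
  set f : ℝ → ℝ := fun σ => σ⁻¹ - 1 with hfdef
  set g : ℝ → ℝ := fun u =>
    u ^ (β + 1/2 - 1) * Real.exp (-((s/2) * u)) * Real.exp (-(s/2)) with hgdef
  have himg : f '' Set.Ioo (0:ℝ) 1 = Set.Ioi (0:ℝ) := by
    ext u
    constructor
    · rintro ⟨σ, ⟨h0, h1⟩, rfl⟩
      have h2 : (1:ℝ) < σ⁻¹ := (one_lt_inv_iff₀).2 ⟨h0, h1⟩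
      simpa [f, Set.mem_Ioi, sub_pos] using h2
    · intro hu
      have hu' : (0:ℝ) < u := hu
      refine ⟨(1 + u)⁻¹, ⟨by positivity, ?_⟩, ?_⟩
      · rw [inv_lt_one_iff₀]; right; linarith
      · simp [f, inv_inv]
  have hinj : Set.InjOn f (Set.Ioo (0:ℝ) 1) := by
    intro a ha' b hb' h
    have : a⁻¹ = b⁻¹ := by
      have := sub_left_inj.mp h
      linarith
    exact inv_injective this
  have hderiv : ∀ σ ∈ Set.Ioo (0:ℝ) 1,
      HasDerivWithinAt f (-(σ ^ 2)⁻¹) (Set.Ioo (0:ℝ) 1) σ := by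
    intro σ hσ
    exact ((hasDerivAt_inv (ne_of_gt hσ.1)).sub_const 1).hasDerivWithinAt
  have key := integral_image_eq_integral_abs_deriv_smul (f' := fun σ => -(σ ^ 2)⁻¹)
    measurableSet_Ioo hderiv hinj g
  rw [himg] at key
  have hLHS : ∫ σ in Set.Ioo (0:ℝ) 1,
      σ ^ (-(3:ℝ)/2 - β) * (1 - σ) ^ (-(1:ℝ)/2 + β) * Real.exp (-s / (2 * σ)) =
      ∫ u in Set.Ioi (0:ℝ), g u := by
    rw [key]
    refine setIntegral_congr_fun measurableSet_Ioo ?_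
    intro σ hσ
    have hσ0 : (0:ℝ) < σ := hσ.1
    have h1σ : (0:ℝ) < 1 - σ := by linarith [hσ.2]
    have habs : |(-(σ ^ 2)⁻¹)| = σ ^ (-2:ℝ) := by
      rw [abs_neg, abs_inv, abs_of_pos (by positivity), ← Real.rpow_natCast σ 2,
        ← Real.rpow_neg hσ0.le]
      norm_num
    have hfσ : σ⁻¹ - 1 = (1 - σ) / σ := by field_simp
    have hexp : -((s/2) * ((1 - σ) / σ)) + -(s/2) = -s / (2 * σ) := by
      field_simp; ring
    have hpow : σ ^ (-(3:ℝ)/2 - β) = σ ^ (-2:ℝ) / σ ^ (β + 1/2 - 1) := by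
      rw [← Real.rpow_sub hσ0]; ring_nf
    simp only [smul_eq_mul, g, f, habs, hfσ]
    rw [Real.div_rpow h1σ.le hσ0.le, ← hexp, Real.exp_add, hpow,
      show (β + 1/2 - 1 : ℝ) = -(1:ℝ)/2 + β by ring]
    ring
  rw [hLHS]
  have hInt : ∫ u in Set.Ioi (0:ℝ), g u =
      ((1 / (s/2)) ^ (β + 1/2) * Real.Gamma (β + 1/2)) * Real.exp (-(s/2)) := by
    simp only [hgdef]
    rw [MeasureTheory.integral_mul_const,
      Real.integral_rpow_mul_exp_neg_mul_Ioi ha hs2]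
  rw [hInt]
  have h2s : (1 / (s/2) : ℝ) ^ (β + 1/2) = 2 ^ ((1:ℝ)/2 + β) * s ^ (-(1:ℝ)/2 - β) := by
    have h1 : (1 / (s/2) : ℝ) = 2 / s := by field_simp
    rw [h1, Real.div_rpow (by norm_num : (0:ℝ) ≤ 2) hs.le, div_eq_mul_inv,
      ← Real.rpow_neg hs.le,
      show (β + 1/2 : ℝ) = (1:ℝ)/2 + β by ring,
      show (-((1:ℝ)/2 + β) : ℝ) = -(1:ℝ)/2 - β by ring]
  rw [h2s, show (β + 1/2 : ℝ) = 1/2 + β by ring,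
    show (-(s/2) : ℝ) = -s/2 by ring]
  ring
end

section
/- For every a with 0 < a < 1/2 and every real s > 0, ∫₀¹ b^(a−3/2) (1−b)^(−a−1/2) exp(−s/(2b)) db = Γ(1/2−a) · 2^(1/2−a) · s^(a−1/2) · exp(−s/2). (This identity is equivalent to the statement that the product of independent Beta(a, 1/2−a) and Gamma(1/2, rate 1/2) random variables has the Gamma(a, rate 1/2) distribution.) -/
open MeasureTheory Real

/-- For every `0 < a < 1/2` and `s > 0`,
`∫₀¹ b^(a−3/2) (1−b)^(−a−1/2) exp(−s/(2b)) db = Γ(1/2−a) · 2^(1/2−a) · s^(a−1/2) · exp(−s/2)`. -/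
theorem stmt2 (a s : ℝ) (ha0 : 0 < a) (ha1 : a < 1/2) (hs : 0 < s) :
    ∫ b in Set.Ioo (0:ℝ) 1,
        b ^ (a - (3:ℝ)/2) * (1 - b) ^ (-a - (1:ℝ)/2) * Real.exp (-s / (2 * b)) =
      Real.Gamma (1/2 - a) * (2:ℝ) ^ ((1:ℝ)/2 - a) * s ^ (a - (1:ℝ)/2) *
        Real.exp (-s / 2) := by
  set φ : ℝ → ℝ := fun t => (1 + t)⁻¹ with hφ
  set φ' : ℝ → ℝ := fun t => -1 / (1 + t) ^ 2 with hφ'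
  have himg : φ '' Set.Ioi 0 = Set.Ioo (0:ℝ) 1 := by
    ext b
    constructor
    · rintro ⟨t, ht, rfl⟩
      have ht0 : (0:ℝ) < t := ht
      have hu : (0:ℝ) < 1 + t := by linarith
      refine ⟨by positivity, ?_⟩
      rw [inv_lt_one_iff₀]
      right; linarith
    · rintro ⟨hb0, hb1⟩
      refine ⟨b⁻¹ - 1, ?_, ?_⟩
      · simp only [Set.mem_Ioi, sub_pos]
        exact (one_lt_inv_iff₀).2 ⟨hb0, hb1⟩
      · simp [hφ, hb0.ne']
  have hderiv : ∀ t ∈ Set.Ioi (0:ℝ), HasDerivWithinAt φ (φ' t) (Set.Ioi 0) t := by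
    intro t ht
    have hu : (0:ℝ) < 1 + t := by simpa using lt_trans ht (by linarith [Set.mem_Ioi.1 ht])
    have : HasDerivAt φ (-1 / (1 + t) ^ 2) t := by
      have h := ((hasDerivAt_id t).const_add 1).inv (by positivity : (0:ℝ) < 1 + t).ne'
      simp at h
      exact h
    exact this.hasDerivWithinAt
  have hinj : Set.InjOn φ (Set.Ioi 0) := by
    intro x hx y hy h
    have : (1:ℝ) + x = 1 + y := inv_injective h
    linarith
  rw [← himg, integral_image_eq_integral_abs_deriv_smul measurableSet_Ioi hderiv hinj]
  have hkey : ∀ t ∈ Set.Ioi (0:ℝ),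
      |φ' t| • (φ t ^ (a - (3:ℝ)/2) * (1 - φ t) ^ (-a - (1:ℝ)/2) *
        Real.exp (-s / (2 * φ t)))
      = Real.exp (-s/2) * (t ^ ((1/2 - a) - 1) * Real.exp (-(s/2 * t))) := by
    intro t ht
    have ht0 : (0:ℝ) < t := ht
    have hu : (0:ℝ) < 1 + t := by linarith
    have habs : |φ' t| = (1 + t) ^ (-(2:ℝ)) := by
      rw [hφ', Real.rpow_neg hu.le]
      simp only [neg_div, abs_neg, abs_div, abs_one]
      rw [abs_of_pos (by positivity), ← Real.rpow_natCast (1 + t) 2]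
      norm_num
    have e1 : φ t ^ (a - (3:ℝ)/2) = (1 + t) ^ ((3:ℝ)/2 - a) := by
      rw [hφ, Real.inv_rpow hu.le, ← Real.rpow_neg hu.le]
      congr 1; ring
    have e2 : (1 - φ t) ^ (-a - (1:ℝ)/2)
        = t ^ (-a - (1:ℝ)/2) * (1 + t) ^ (a + (1:ℝ)/2) := by
      have : 1 - φ t = t / (1 + t) := by
        rw [hφ]; field_simp; ring
      rw [this, Real.div_rpow ht0.le hu.le, div_eq_mul_inv, ← Real.rpow_neg hu.le]
      congr 2; ring
    have e3 : Real.exp (-s / (2 * φ t)) = Real.exp (-(s/2)) * Real.exp (-(s/2 * t)) := by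
      rw [← Real.exp_add]
      congr 1
      rw [hφ]
      field_simp
      ring
    rw [smul_eq_mul, habs, e1, e2, e3]
    have hcomb : (1 + t) ^ (-(2:ℝ)) * ((1 + t) ^ ((3:ℝ)/2 - a) *
        (t ^ (-a - (1:ℝ)/2) * (1 + t) ^ (a + (1:ℝ)/2)))
        = t ^ ((1/2 - a) - 1) := by
      rw [show (-a - (1:ℝ)/2) = ((1:ℝ)/2 - a) - 1 by ring]
      rw [show (1 + t) ^ (-(2:ℝ)) * ((1 + t) ^ ((3:ℝ)/2 - a) *
          (t ^ ((1/2 - a) - 1) * (1 + t) ^ (a + (1:ℝ)/2)))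
          = ((1 + t) ^ (-(2:ℝ)) * (1 + t) ^ ((3:ℝ)/2 - a) * (1 + t) ^ (a + (1:ℝ)/2)) *
            t ^ ((1/2 - a) - 1) by ring]
      rw [← Real.rpow_add hu, ← Real.rpow_add hu,
        show (-(2:ℝ) + ((3:ℝ)/2 - a) + (a + (1:ℝ)/2)) = 0 by ring, Real.rpow_zero, one_mul]
    calc (1 + t) ^ (-(2:ℝ)) * ((1 + t) ^ ((3:ℝ)/2 - a) *
          (t ^ (-a - (1:ℝ)/2) * (1 + t) ^ (a + (1:ℝ)/2)) *
          (Real.exp (-(s/2)) * Real.exp (-(s/2 * t))))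
        = ((1 + t) ^ (-(2:ℝ)) * ((1 + t) ^ ((3:ℝ)/2 - a) *
            (t ^ (-a - (1:ℝ)/2) * (1 + t) ^ (a + (1:ℝ)/2)))) *
          (Real.exp (-(s/2)) * Real.exp (-(s/2 * t))) := by ring
      _ = Real.exp (-s/2) * (t ^ ((1/2 - a) - 1) * Real.exp (-(s/2 * t))) := by
          rw [hcomb, neg_div]; ring
  rw [setIntegral_congr_fun measurableSet_Ioi hkey, integral_const_mul]
  have h2 : (0:ℝ) < 1/2 - a := by linarith
  have hgam := integral_rpow_mul_exp_neg_mul_Ioi h2 (by positivity : (0:ℝ) < s/2)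
  rw [hgam]
  have : ((1:ℝ) / (s/2)) ^ ((1:ℝ)/2 - a) = (2:ℝ) ^ ((1:ℝ)/2 - a) * s ^ (a - (1:ℝ)/2) := by
    rw [one_div, show (s/2)⁻¹ = 2 / s by field_simp, Real.div_rpow (by norm_num) hs.le,
      div_eq_mul_inv, ← Real.rpow_neg hs.le]
    congr 2; ring
  rw [this]
  ring
end

section
/- Let Q be a standard normal random variable and σ > 0 a real number. Then the law of σ·(max(Q,0))² is the mixture (1/2)·δ₀ + (1/2)·Gamma(1/2, rate 1/(2σ)); that is, the pushforward of the standard Gaussian measure on ℝ under the map x ↦ σ·(max x 0)² equals one half times the Dirac measure at 0 plus one half times the Gamma measure with shape 1/2 and rate 1/(2σ). -/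
open MeasureTheory ProbabilityTheory
open scoped ENNReal NNReal

open Real Set

lemma aux_cov {s : Set ℝ} {f f' : ℝ → ℝ} (hs : MeasurableSet s)
    (hf' : ∀ x ∈ s, HasDerivWithinAt f (f' x) s x) (hf : Set.InjOn f s) (g : ℝ → ℝ≥0∞) :
    ∫⁻ x in f '' s, g x = ∫⁻ x in s, ENNReal.ofReal |f' x| * g (f x) := by
  simpa only [ContinuousLinearMap.det_toSpanSingleton] using
    MeasureTheory.lintegral_image_eq_lintegral_abs_det_fderiv_mul volume hs
      (fun x hx => (hf' x hx).hasFDerivWithinAt) hf g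

lemma gauss_Iic : gaussianReal 0 1 (Iic 0) = 1/2 := by
  set ν := gaussianReal 0 1 with hν
  have hmap : ν.map ((-1 : ℝ) * ·) = ν := by
    rw [hν, gaussianReal_map_const_mul (-1)]
    norm_num
  have h0 : ν {0} = 0 := by
    refine gaussianReal_absolutelyContinuous 0 one_ne_zero ?_
    exact measure_singleton 0
  have h1 : ν (Iic 0) = ν (Ici 0) := by
    conv_lhs => rw [← hmap]
    rw [Measure.map_apply (by fun_prop) measurableSet_Iic]
    congr 1
    ext x
    simp
  have h2 : ν (Ici 0) = ν (Ioi 0) := by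
    rw [← Set.Ioi_insert]
    refine le_antisymm ?_ (measure_mono (Set.subset_insert _ _))
    calc ν (insert 0 (Ioi 0)) = ν ({0} ∪ Ioi 0) := by rw [Set.singleton_union]
    _ ≤ ν {0} + ν (Ioi 0) := measure_union_le _ _
    _ = ν (Ioi 0) := by rw [h0, zero_add]
  have h3 : ν (Iic 0) + ν (Ioi 0) = 1 := by
    rw [← measure_union (by simp [Set.disjoint_left]) measurableSet_Ioi,
      Set.Iic_union_Ioi]
    exact measure_univ
  rw [h1, h2] at h3
  rw [h1, h2, ENNReal.eq_div_iff two_ne_zero ENNReal.ofNat_ne_top, two_mul]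
  exact h3

lemma key_pointwise (σ : ℝ) (hσ : 0 < σ) {x : ℝ} (hx : 0 < x) :
    ENNReal.ofReal |σ * (2 * x ^ 1)| * gammaPDF (1/2) (1 / (2 * σ)) (σ * x ^ 2) =
      2 * gaussianPDF 0 1 x := by
  have hσx : (0:ℝ) ≤ σ * x ^ 2 := by positivity
  rw [gammaPDF_of_nonneg hσx, gaussianPDF,
    show (2 : ℝ≥0∞) = ENNReal.ofReal 2 by norm_num,
    ← ENNReal.ofReal_mul (abs_nonneg _), ← ENNReal.ofReal_mul (by norm_num : (0:ℝ) ≤ 2)]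
  congr 1
  have hE : rexp (-(1 / (2 * σ) * (σ * x ^ 2))) = rexp (-(x - 0) ^ 2 / (2 * (1:ℝ≥0))) := by
    congr 1
    field_simp
    push_cast; ring
  rw [hE, gaussianPDFReal]
  have h2 : |σ * (2 * x ^ 1)| = 2 * σ * x := by
    rw [abs_of_nonneg (by positivity)]; ring
  have hx2 : (σ * x ^ 2) ^ ((1:ℝ)/2 - 1) = (Real.sqrt σ * x)⁻¹ := by
    rw [show (1:ℝ)/2 - 1 = -(1/2) by norm_num, Real.rpow_neg hσx, ← Real.sqrt_eq_rpow,
      Real.sqrt_mul hσ.le, Real.sqrt_sq hx.le]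
  have hr : ((1:ℝ) / (2 * σ)) ^ ((1:ℝ)/2) = (Real.sqrt 2 * Real.sqrt σ)⁻¹ := by
    rw [← Real.sqrt_eq_rpow, one_div, Real.sqrt_inv, Real.sqrt_mul (by norm_num)]
  rw [h2, hx2, hr, Real.Gamma_one_half_eq]
  have s2 : Real.sqrt 2 * Real.sqrt 2 = 2 := Real.mul_self_sqrt (by norm_num)
  have sσ : Real.sqrt σ * Real.sqrt σ = σ := Real.mul_self_sqrt hσ.le
  have sπ : Real.sqrt π * Real.sqrt π = π := Real.mul_self_sqrt pi_pos.le
  have h2π : Real.sqrt (2 * π * (1:ℝ≥0)) = Real.sqrt 2 * Real.sqrt π := by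
    push_cast
    rw [mul_one, Real.sqrt_mul (by norm_num)]
  rw [h2π]
  have hs2 : Real.sqrt 2 ≠ 0 := by positivity
  have hsσ : Real.sqrt σ ≠ 0 := by positivity
  have hsπ : Real.sqrt π ≠ 0 := by positivity
  field_simp
  linear_combination (-1) * sσ

/-- The pushforward of the standard Gaussian measure on `ℝ` under `x ↦ σ·(max x 0)²`
is the mixture `(1/2)·δ₀ + (1/2)·Gamma(1/2, rate 1/(2σ))`. -/
theorem stmt3 (σ : ℝ) (hσ : 0 < σ) :
    (gaussianReal 0 1).map (fun x => σ * (max x 0) ^ 2) =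
      (1/2 : ℝ≥0∞) • Measure.dirac (0 : ℝ) +
        (1/2 : ℝ≥0∞) • gammaMeasure (1/2) (1 / (2 * σ)) := by
  have hσ' : σ ≠ 0 := hσ.ne'
  have hf : Measurable fun x : ℝ => σ * max x 0 ^ 2 := by fun_prop
  ext s hs
  rw [Measure.map_apply hf hs, Measure.coe_add, Pi.add_apply, Measure.smul_apply,
    Measure.smul_apply, smul_eq_mul, smul_eq_mul]
  set A : Set ℝ := (fun x : ℝ => σ * max x 0 ^ 2) ⁻¹' s with hA
  have hAm : MeasurableSet A := hf hs
  have hsplit : gaussianReal 0 1 A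
      = gaussianReal 0 1 (A ∩ Iic 0) + gaussianReal 0 1 (A ∩ Ioi 0) := by
    rw [← measure_union ((Set.Iic_disjoint_Ioi le_rfl).mono Set.inter_subset_right
        Set.inter_subset_right)
      (hAm.inter measurableSet_Ioi), ← Set.inter_union_distrib_left, Set.Iic_union_Ioi,
      Set.inter_univ]
  have h1 : gaussianReal 0 1 (A ∩ Iic 0) = (1/2 : ℝ≥0∞) * Measure.dirac 0 s := by
    rw [Measure.dirac_apply' _ hs]
    by_cases h0 : (0:ℝ) ∈ s
    · have hIic : A ∩ Iic 0 = Iic 0 := by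
        ext x
        simp only [hA, Set.mem_inter_iff, Set.mem_preimage, Set.mem_Iic, and_iff_right_iff_imp]
        intro hx
        rw [max_eq_right hx]
        simpa using h0
      rw [hIic, gauss_Iic, Set.indicator_of_mem h0, Pi.one_apply, mul_one]
    · have hIic : A ∩ Iic 0 = ∅ := by
        ext x
        simp only [hA, Set.mem_inter_iff, Set.mem_preimage, Set.mem_Iic, Set.mem_empty_iff_false,
          iff_false, not_and]
        intro hx hx0
        rw [max_eq_right hx0] at hx
        apply h0
        simpa using hx
      rw [hIic, Set.indicator_of_notMem h0]
      simp
  have h2 : gaussianReal 0 1 (A ∩ Ioi 0)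
      = (1/2 : ℝ≥0∞) * gammaMeasure (1/2) (1 / (2 * σ)) s := by
    set φ : ℝ → ℝ := fun x => σ * x ^ 2 with hφ
    have himg : φ '' (Ioi 0) = Ioi 0 := by
      ext y
      simp only [Set.mem_image, Set.mem_Ioi]
      constructor
      · rintro ⟨x, hx, rfl⟩; positivity
      · intro hy
        refine ⟨Real.sqrt (y / σ), Real.sqrt_pos.mpr (by positivity), ?_⟩
        rw [hφ]
        simp only
        rw [Real.sq_sqrt (by positivity)]
        field_simp
    have hAIoi : A ∩ Ioi 0 = φ ⁻¹' s ∩ Ioi 0 := by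
      ext x
      simp only [hA, hφ, Set.mem_inter_iff, Set.mem_preimage, Set.mem_Ioi, and_congr_left_iff]
      intro hx
      rw [max_eq_left hx.le]
    have himage : φ '' (A ∩ Ioi 0) = s ∩ Ioi 0 := by
      rw [hAIoi, Set.image_preimage_inter, himg, Set.inter_comm]
    -- gamma side
    rw [gammaMeasure, withDensity_apply _ hs]
    have hsplit2 : ∫⁻ x in s, gammaPDF (1/2) (1 / (2*σ)) x
        = ∫⁻ x in s ∩ Ioi 0, gammaPDF (1/2) (1 / (2*σ)) x := by
      have : s = (s ∩ Ioi 0) ∪ (s ∩ Iic 0) := by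
        rw [← Set.inter_union_distrib_left, Set.union_comm, Set.Iic_union_Ioi,
          Set.inter_univ]
      conv_lhs => rw [this]
      rw [lintegral_union (hs.inter measurableSet_Iic)
        ((Set.Iic_disjoint_Ioi le_rfl).symm.mono Set.inter_subset_right Set.inter_subset_right)]
      have hz : ∫⁻ x in s ∩ Iic 0, gammaPDF (1/2) (1 / (2*σ)) x = 0 := by
        rw [setLIntegral_congr_fun (hs.inter measurableSet_Iic)
          (fun x hx => ?_), lintegral_zero]
        rcases lt_or_eq_of_le (Set.mem_Iic.mp hx.2) with h | h
        · exact gammaPDF_of_neg h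
        · rw [h, gammaPDF_of_nonneg le_rfl]
          rw [Real.zero_rpow (by norm_num)]
          simp
      rw [hz, add_zero]
    rw [hsplit2, ← himage,
      aux_cov (hAm.inter measurableSet_Ioi)
        (f' := fun x => σ * (2 * x ^ 1))
        (fun x _ => by simpa using ((hasDerivAt_pow 2 x).const_mul σ).hasDerivWithinAt)
        (fun x hx y hy h => by
          have hx2 : x ^ 2 = y ^ 2 := mul_left_cancel₀ hσ' h
          rw [← Real.sqrt_sq (le_of_lt (Set.mem_Ioi.mp hx.2)),
            ← Real.sqrt_sq (le_of_lt (Set.mem_Ioi.mp hy.2)), hx2])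
        (gammaPDF (1/2) (1 / (2*σ)))]
    rw [setLIntegral_congr_fun (hAm.inter measurableSet_Ioi)
      (fun x hx => key_pointwise σ hσ hx.2)]
    rw [lintegral_const_mul 2 (measurable_gaussianPDF 0 1), ← mul_assoc,
      show (1/2 : ℝ≥0∞) * 2 = 1 by rw [one_div, ENNReal.inv_mul_cancel two_ne_zero ENNReal.ofNat_ne_top],
      one_mul, gaussianReal_apply 0 one_ne_zero]
  rw [hsplit, h1, h2]
end

section
/- For every α > 0 and all 0 < δ < t < 1, the sequence n ↦ [n / B(α/n, 1/2 − α/n)] · ∫_δ^t σ^(α/n − 1) (1 − σ)^(−1/2 − α/n) dσ converges, as n → ∞, to α · ∫_δ^t σ^(−1) (1 − σ)^(−1/2) dσ, where B(p,q) = Γ(p)Γ(q)/Γ(p+q) is the Beta function. (This identifies the limiting intensity measure of the Beta approximation to the Poisson process with intensity α σ^(−1)(1−σ)^(−1/2).) -/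
open Filter MeasureTheory Real

/-- For every `α > 0` and `0 < δ < t < 1`,
`[n / B(α/n, 1/2 − α/n)] · ∫_δ^t σ^(α/n − 1) (1 − σ)^(−1/2 − α/n) dσ
  → α · ∫_δ^t σ^(−1) (1 − σ)^(−1/2) dσ` as `n → ∞`,
where `B(p,q) = Γ(p)Γ(q)/Γ(p+q)` is the Beta function. -/
theorem stmt5 (α δ t : ℝ) (hα : 0 < α) (hδ : 0 < δ) (hδt : δ < t) (ht : t < 1) :
    Tendsto
      (fun n : ℕ =>
        ((n : ℝ) /
            (Real.Gamma (α / (n : ℝ)) * Real.Gamma (1/2 - α / (n : ℝ)) /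
              Real.Gamma (α / (n : ℝ) + (1/2 - α / (n : ℝ))))) *
          ∫ σ in Set.Ioo δ t,
            σ ^ (α / (n : ℝ) - 1) * (1 - σ) ^ (-(1:ℝ)/2 - α / (n : ℝ)))
      atTop
      (nhds (α * ∫ σ in Set.Ioo δ t, σ ^ (-(1:ℝ)) * (1 - σ) ^ (-(1:ℝ)/2))) := by
  have ht0 : (0:ℝ) < t := hδ.trans hδt
  have hδ1 : δ < 1 := hδt.trans ht
  have hto : Tendsto (fun n : ℕ => α / (n : ℝ)) atTop (nhds 0) :=
    tendsto_const_div_atTop_nhds_zero_nat α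
  have hG12 : (0:ℝ) < Real.Gamma (1/2) := Real.Gamma_pos_of_pos (by norm_num)
  -- Part 1 : prefactor tends to α
  have hcont1 : ContinuousAt Real.Gamma 1 := by
    refine (Real.differentiableAt_Gamma ?_).continuousAt
    intro m
    have : -(m:ℝ) ≤ 0 := neg_nonpos.2 (Nat.cast_nonneg m)
    linarith
  have hcont2 : ContinuousAt Real.Gamma (1/2) := by
    refine (Real.differentiableAt_Gamma ?_).continuousAt
    intro m
    have : -(m:ℝ) ≤ 0 := neg_nonpos.2 (Nat.cast_nonneg m)
    linarith
  have h1 : Tendsto (fun n : ℕ => Real.Gamma (1 + α / n)) atTop (nhds 1) := by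
    have := hcont1.tendsto.comp
      (show Tendsto (fun n : ℕ => 1 + α / (n:ℝ)) atTop (nhds 1) by
        simpa using tendsto_const_nhds.add hto)
    simpa [Real.Gamma_one, Function.comp_def] using this
  have h2 : Tendsto (fun n : ℕ => Real.Gamma (1/2 - α / n)) atTop
      (nhds (Real.Gamma (1/2))) := by
    have := hcont2.tendsto.comp
      (show Tendsto (fun n : ℕ => 1/2 - α / (n:ℝ)) atTop (nhds (1/2)) by
        simpa using tendsto_const_nhds.sub hto)
    simpa [Function.comp_def] using this
  have hg : Tendsto (fun n : ℕ =>
      α * Real.Gamma (1/2) / (Real.Gamma (1 + α / n) * Real.Gamma (1/2 - α / n)))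
      atTop (nhds α) := by
    have := (tendsto_const_nhds (x := α * Real.Gamma (1/2))).div (h1.mul h2)
      (by simpa using hG12.ne')
    have h' : α * Real.Gamma (1/2) / (1 * Real.Gamma (1/2)) = α := by
      field_simp
    rwa [h'] at this
  have hpre : Tendsto (fun n : ℕ => ((n : ℝ) /
      (Real.Gamma (α / (n : ℝ)) * Real.Gamma (1/2 - α / (n : ℝ)) /
        Real.Gamma (α / (n : ℝ) + (1/2 - α / (n : ℝ)))))) atTop (nhds α) := by
    refine hg.congr' ?_
    have hev : ∀ᶠ n : ℕ in atTop, α / (n:ℝ) < 1/2 :=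
      hto.eventually_lt_const (by norm_num)
    filter_upwards [hev, eventually_ge_atTop 1] with n hn hn1
    have hn0 : (0:ℝ) < (n:ℝ) := by exact_mod_cast hn1
    have hx : 0 < α / (n:ℝ) := div_pos hα hn0
    have hA : 0 < Real.Gamma (α / n) := Real.Gamma_pos_of_pos hx
    have hB : 0 < Real.Gamma (1/2 - α / n) := Real.Gamma_pos_of_pos (by linarith)
    have e1 : α / (n:ℝ) + (1/2 - α / (n:ℝ)) = 1/2 := by ring
    have e2 : Real.Gamma (1 + α / (n:ℝ)) = (α / n) * Real.Gamma (α / n) := by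
      rw [add_comm]; exact Real.Gamma_add_one hx.ne'
    rw [e1, e2]
    have hα' : α ≠ 0 := hα.ne'
    have hn' : (n:ℝ) ≠ 0 := hn0.ne'
    rw [div_div_eq_mul_div, div_eq_div_iff
      (mul_ne_zero (mul_ne_zero hx.ne' hA.ne') hB.ne') (mul_ne_zero hA.ne' hB.ne')]
    field_simp
  -- Part 2 : integrals converge (dominated convergence)
  have hint : Tendsto (fun n : ℕ => ∫ σ in Set.Ioo δ t,
      σ ^ (α / (n : ℝ) - 1) * (1 - σ) ^ (-(1:ℝ)/2 - α / (n : ℝ))) atTop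
      (nhds (∫ σ in Set.Ioo δ t, σ ^ (-(1:ℝ)) * (1 - σ) ^ (-(1:ℝ)/2))) := by
    refine MeasureTheory.tendsto_integral_of_dominated_convergence
      (fun _ => δ⁻¹ * (1 - t) ^ (-(1:ℝ)/2 - α)) ?_ ?_ ?_ ?_
    · -- measurability
      intro n
      refine ContinuousOn.aestronglyMeasurable ?_ measurableSet_Ioo
      intro σ hσ
      refine ContinuousAt.continuousWithinAt ?_
      exact ((Real.continuousAt_rpow_const σ _ (Or.inl (hδ.trans hσ.1).ne')).mul
        ((Real.continuousAt_rpow_const (1 - σ) _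
          (Or.inl (sub_ne_zero.2 (hσ.2.trans ht).ne'))).comp
          (continuous_const.sub continuous_id).continuousAt))
    · exact integrable_const _
    · -- bound
      intro n
      refine (ae_restrict_iff' measurableSet_Ioo).2 (ae_of_all _ fun σ hσ => ?_)
      obtain ⟨hσδ, hσt⟩ := hσ
      have hσ0 : 0 < σ := hδ.trans hσδ
      have hσ1 : σ < 1 := hσt.trans ht
      have h1σ : 0 < 1 - σ := by linarith
      have h1t : 0 < 1 - t := by linarith
      have hb1 : σ ^ (α / (n:ℝ) - 1) ≤ δ⁻¹ := by
        have hle : σ ^ (α / (n:ℝ) - 1) ≤ σ ^ (-1 : ℝ) := by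
          refine Real.rpow_le_rpow_of_exponent_ge hσ0 hσ1.le ?_
          have : 0 ≤ α / (n:ℝ) := by positivity
          linarith
        rw [Real.rpow_neg_one] at hle
        exact hle.trans (by
          have := inv_anti₀ hδ hσδ.le
          exact this)
      have hαn : α / (n:ℝ) ≤ α := by
        rcases Nat.eq_zero_or_pos n with h | h
        · simp [h, hα.le]
        · exact div_le_self hα.le (by exact_mod_cast h)
      have hb2 : (1 - σ) ^ (-(1:ℝ)/2 - α / n) ≤ (1 - t) ^ (-(1:ℝ)/2 - α) := by
        have s1 : (1 - σ) ^ (-(1:ℝ)/2 - α / n) ≤ (1 - σ) ^ (-(1:ℝ)/2 - α) :=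
          Real.rpow_le_rpow_of_exponent_ge h1σ (by linarith) (by linarith)
        have s2 : (1 - σ) ^ (-(1:ℝ)/2 - α) ≤ (1 - t) ^ (-(1:ℝ)/2 - α) :=
          Real.rpow_le_rpow_of_nonpos h1t (by linarith) (by linarith)
        exact s1.trans s2
      have hnn : 0 ≤ σ ^ (α / (n:ℝ) - 1) * (1 - σ) ^ (-(1:ℝ)/2 - α / n) := by
        positivity
      rw [Real.norm_eq_abs, abs_of_nonneg hnn]
      exact mul_le_mul hb1 hb2 (Real.rpow_nonneg h1σ.le _) (by positivity)
    · -- pointwise convergence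
      refine (ae_restrict_iff' measurableSet_Ioo).2 (ae_of_all _ fun σ hσ => ?_)
      obtain ⟨hσδ, hσt⟩ := hσ
      have hσ0 : 0 < σ := hδ.trans hσδ
      have h1σ : 0 < 1 - σ := by nlinarith [hσt.trans ht]
      have t1 : Tendsto (fun n : ℕ => σ ^ (α / (n:ℝ) - 1)) atTop
          (nhds (σ ^ (-(1:ℝ)))) := by
        have := (tendsto_const_nhds (x := σ)).rpow
          (hto.sub (tendsto_const_nhds (x := (1:ℝ)))) (Or.inl hσ0.ne')
        simpa using this
      have t2 : Tendsto (fun n : ℕ => (1 - σ) ^ (-(1:ℝ)/2 - α / (n:ℝ))) atTop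
          (nhds ((1 - σ) ^ (-(1:ℝ)/2))) := by
        have := (tendsto_const_nhds (x := 1 - σ)).rpow
          ((tendsto_const_nhds (x := -(1:ℝ)/2)).sub hto) (Or.inl h1σ.ne')
        simpa using this
      exact t1.mul t2
  exact hpre.mul hint
end

section
/- Let (Ω, P) be a probability space, (E, ℰ) a measurable space, and Z₁, Z₂, … an i.i.d. sequence of E-valued random variables with common distribution G. Let w = (wᵢ) and w' = (w'ᵢ) be sequences of nonnegative reals with Σᵢ wᵢ = 1 and Σᵢ w'ᵢ = 1, and for a measurable set A define P_w(A) = Σᵢ wᵢ·1{Zᵢ ∈ A} and P_{w'}(A) = Σᵢ w'ᵢ·1{Zᵢ ∈ A}. Then for every measurable set A with 0 < G(A) < 1, the correlation Cov(P_w(A), P_{w'}(A)) / √(Var(P_w(A)) · Var(P_{w'}(A))) equals Σᵢ wᵢ w'ᵢ / √((Σᵢ wᵢ²)·(Σᵢ w'ᵢ²)); in particular it does not depend on the set A. (This is the conditional-on-weights version of Proposition 1: the correlation of two dependent random probability measures at a common set depends only on the weight sequences, not on the set.) -/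
open MeasureTheory ProbabilityTheory Filter
open scoped ENNReal NNReal

/-- The random probability of a set under weights `w`: `P_w(A)(ω) = Σᵢ wᵢ·1{Zᵢ(ω) ∈ A}`. -/
noncomputable def randProb {Ω E : Type*} (w : ℕ → ℝ) (Z : ℕ → Ω → E) (A : Set E) (ω : Ω) : ℝ :=
  ∑' i, w i * Set.indicator A (fun _ => (1 : ℝ)) (Z i ω)

section Aux

variable {Ω E : Type*} [MeasurableSpace Ω] [MeasurableSpace E]

lemma aux_measurable_tsum {f : ℕ → Ω → ℝ}
    (hf : ∀ i, Measurable (f i)) (hsum : ∀ ω, Summable fun i => f i ω) :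
    Measurable (fun ω => ∑' i, f i ω) := by
  apply measurable_of_tendsto_metrizable
    (f := fun n ω => ∑ i ∈ Finset.range n, f i ω)
    (fun n => Finset.measurable_sum _ fun i _ => hf i)
  rw [tendsto_pi_nhds]
  exact fun ω => (hsum ω).hasSum.tendsto_sum_nat

lemma aux_nnnorm_le {a x y : ℝ} (hx0 : 0 ≤ x) (hx1 : x ≤ 1) (hy0 : 0 ≤ y) (hy1 : y ≤ 1) :
    ‖a * x * y‖₊ ≤ ‖a‖₊ := by
  rw [← NNReal.coe_le_coe, coe_nnnorm, coe_nnnorm, Real.norm_eq_abs, Real.norm_eq_abs,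
    abs_mul, abs_mul, abs_of_nonneg hx0, abs_of_nonneg hy0]
  nlinarith [abs_nonneg a, mul_nonneg (abs_nonneg a) hx0]

lemma aux_summable_nnnorm {w : ℕ → ℝ} (hw : ∀ i, 0 ≤ w i) (hsw : Summable w) :
    Summable fun i => ‖w i‖₊ := by
  have h : (fun i => (‖w i‖₊ : ℝ)) = w :=
    funext fun i => by rw [coe_nnnorm, Real.norm_eq_abs, abs_of_nonneg (hw i)]
  exact NNReal.summable_coe.mp (by rw [h]; exact hsw)

lemma aux_tsum_lint_ne_top {P : Measure Ω} [IsProbabilityMeasure P] {f : ℕ → Ω → ℝ}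
    {w : ℕ → ℝ} (hw : ∀ i, 0 ≤ w i) (hsw : Summable w)
    (h : ∀ i ω, ‖f i ω‖₊ ≤ ‖w i‖₊) :
    (∑' i, ∫⁻ ω, ‖f i ω‖₊ ∂P) ≠ ⊤ := by
  refine ne_top_of_le_ne_top (ENNReal.tsum_coe_ne_top_iff_summable.2
      (aux_summable_nnnorm hw hsw)) (ENNReal.tsum_le_tsum fun i => ?_)
  calc ∫⁻ ω, ‖f i ω‖₊ ∂P ≤ ∫⁻ _, (‖w i‖₊ : ℝ≥0∞) ∂P :=
        lintegral_mono fun ω => ENNReal.coe_le_coe.mpr (h i ω)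
    _ = ‖w i‖₊ := by simp

end Aux

section Moments

variable {Ω E : Type*} [MeasurableSpace Ω] [MeasurableSpace E]

lemma aux_cross (P : Measure Ω) [IsProbabilityMeasure P]
    (G : Measure E) [IsProbabilityMeasure G]
    (Z : ℕ → Ω → E) (hZmeas : ∀ i, Measurable (Z i))
    (hindep : iIndepFun Z P)
    (hdist : ∀ i, P.map (Z i) = G)
    (w w' : ℕ → ℝ) (hw : ∀ i, 0 ≤ w i) (hw' : ∀ i, 0 ≤ w' i)
    (hw1 : ∑' i, w i = 1) (hw'1 : ∑' i, w' i = 1)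
    (A : Set E) (hA : MeasurableSet A) :
    ∫ ω, randProb w Z A ω * randProb w' Z A ω ∂P =
      (G A).toReal ^ 2 +
        ((G A).toReal - (G A).toReal ^ 2) * ∑' i, w i * w' i := by
  classical
  set p : ℝ := (G A).toReal with hp
  set X : ℕ → Ω → ℝ := fun i ω => Set.indicator A (fun _ => (1 : ℝ)) (Z i ω) with hX
  have hsw : Summable w := by
    by_contra h; rw [tsum_eq_zero_of_not_summable h] at hw1; norm_num at hw1
  have hsw' : Summable w' := by
    by_contra h; rw [tsum_eq_zero_of_not_summable h] at hw'1; norm_num at hw'1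
  have hindmeas : Measurable (Set.indicator A (fun _ => (1 : ℝ))) :=
    measurable_const.indicator hA
  have hXmeas : ∀ i, Measurable (X i) := fun i => hindmeas.comp (hZmeas i)
  have hX0 : ∀ i ω, 0 ≤ X i ω := fun i ω =>
    Set.indicator_nonneg (fun _ _ => zero_le_one) _
  have hX1 : ∀ i ω, X i ω ≤ 1 := fun i ω => by
    simp only [hX, Set.indicator_apply]; split_ifs <;> norm_num
  -- first moment of each indicator
  have hEX : ∀ i, ∫ ω, X i ω ∂P = p := by
    intro i
    calc ∫ ω, X i ω ∂P
        = ∫ z, Set.indicator A (fun _ => (1 : ℝ)) z ∂(P.map (Z i)) :=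
          (integral_map (hZmeas i).aemeasurable hindmeas.aestronglyMeasurable).symm
      _ = ∫ z, Set.indicator A (fun _ => (1 : ℝ)) z ∂G := by rw [hdist i]
      _ = p := integral_indicator_one hA
  -- second moments
  have hEXX : ∀ i j, ∫ ω, X i ω * X j ω ∂P = if j = i then p else p ^ 2 := by
    intro i j
    by_cases hij : j = i
    · subst hij
      have hsq : ∀ ω, X j ω * X j ω = X j ω := fun ω => by
        simp only [hX, Set.indicator_apply]; split_ifs <;> norm_num
      simp only [hsq, hEX j]; simp
    · have hind : IndepFun (X i) (X j) P :=
        (hindep.indepFun (fun h => hij h.symm)).comp hindmeas hindmeas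
      have := hind.integral_mul_eq_mul_integral (hXmeas i).aestronglyMeasurable
        (hXmeas j).aestronglyMeasurable
      simp only [if_neg hij]
      calc ∫ ω, X i ω * X j ω ∂P = (∫ ω, X i ω ∂P) * ∫ ω, X j ω ∂P := this
        _ = p ^ 2 := by rw [hEX i, hEX j]; ring
  -- properties of randProb w'
  set R' : Ω → ℝ := fun ω => randProb w' Z A ω with hR'
  have hsummand : ∀ ω, Summable fun j => w' j * X j ω := fun ω =>
    Summable.of_nonneg_of_le (fun j => mul_nonneg (hw' j) (hX0 j ω))
      (fun j => mul_le_of_le_one_right (hw' j) (hX1 j ω)) hsw'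
  have hR'0 : ∀ ω, 0 ≤ R' ω := fun ω =>
    tsum_nonneg fun j => mul_nonneg (hw' j) (hX0 j ω)
  have hR'1 : ∀ ω, R' ω ≤ 1 := fun ω => by
    rw [← hw'1]
    exact Summable.tsum_le_tsum (fun j => mul_le_of_le_one_right (hw' j) (hX1 j ω))
      (hsummand ω) hsw'
  have hR'meas : Measurable R' :=
    aux_measurable_tsum (fun j => (hXmeas j).const_mul (w' j)) hsummand
  -- inner computation: ∫ X i * R' = p² + (p - p²) * w' i
  have hinner : ∀ i, ∫ ω, X i ω * R' ω ∂P = p ^ 2 + (p - p ^ 2) * w' i := by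
    intro i
    have h1 : ∀ ω, X i ω * R' ω = ∑' j, X i ω * (w' j * X j ω) := fun ω =>
      (tsum_mul_left).symm
    have h2 : ∫ ω, X i ω * R' ω ∂P = ∑' j, ∫ ω, X i ω * (w' j * X j ω) ∂P := by
      simp_rw [h1]
      refine integral_tsum (fun j => ((hXmeas i).mul
        ((hXmeas j).const_mul (w' j))).aestronglyMeasurable) ?_
      refine aux_tsum_lint_ne_top hw' hsw' (fun j ω => ?_)
      have : X i ω * (w' j * X j ω) = w' j * X j ω * X i ω := by ring
      rw [this]
      exact aux_nnnorm_le (hX0 j ω) (hX1 j ω) (hX0 i ω) (hX1 i ω)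
    rw [h2]
    have h3 : ∀ j, ∫ ω, X i ω * (w' j * X j ω) ∂P
        = p ^ 2 * w' j + (if j = i then (p - p ^ 2) * w' i else 0) := by
      intro j
      have : ∀ ω, X i ω * (w' j * X j ω) = w' j * (X i ω * X j ω) := fun ω => by ring
      simp_rw [this, integral_const_mul, hEXX i j]
      by_cases hij : j = i
      · subst hij; simp; ring
      · simp [hij]; ring
    simp_rw [h3]
    rw [Summable.tsum_add (hsw'.mul_left (p ^ 2)) (hasSum_ite_eq i ((p - p ^ 2) * w' i)).summable,
      tsum_mul_left, hw'1, (hasSum_ite_eq i ((p - p ^ 2) * w' i)).tsum_eq]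
    ring
  -- outer computation
  have h4 : ∀ ω, randProb w Z A ω * R' ω = ∑' i, w i * X i ω * R' ω := fun ω =>
    (tsum_mul_right).symm
  have h5 : ∫ ω, randProb w Z A ω * R' ω ∂P = ∑' i, ∫ ω, w i * X i ω * R' ω ∂P := by
    simp_rw [h4]
    refine integral_tsum (fun i => (((hXmeas i).const_mul (w i)).mul
      hR'meas).aestronglyMeasurable) ?_
    refine aux_tsum_lint_ne_top hw hsw (fun i ω => ?_)
    have : w i * X i ω * R' ω = w i * X i ω * R' ω := rfl
    exact aux_nnnorm_le (hX0 i ω) (hX1 i ω) (hR'0 ω) (hR'1 ω)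
  rw [h5]
  have h6 : ∀ i, ∫ ω, w i * X i ω * R' ω ∂P
      = p ^ 2 * w i + (p - p ^ 2) * (w i * w' i) := by
    intro i
    have : ∀ ω, w i * X i ω * R' ω = w i * (X i ω * R' ω) := fun ω => by ring
    simp_rw [this, integral_const_mul, hinner i]
    ring
  simp_rw [h6]
  have hsww' : Summable fun i => w i * w' i := by
    refine Summable.of_nonneg_of_le (fun i => mul_nonneg (hw i) (hw' i))
      (fun i => mul_le_of_le_one_right (hw i) ?_) hsw
    rw [← hw'1]
    exact Summable.le_tsum hsw' i (fun j _ => hw' j)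
  rw [Summable.tsum_add (hsw.mul_left (p ^ 2)) (hsww'.mul_left (p - p ^ 2)),
    tsum_mul_left, tsum_mul_left, hw1]
  ring

end Moments

section Mean

variable {Ω E : Type*} [MeasurableSpace Ω] [MeasurableSpace E]

lemma aux_mean (P : Measure Ω) [IsProbabilityMeasure P]
    (G : Measure E) [IsProbabilityMeasure G]
    (Z : ℕ → Ω → E) (hZmeas : ∀ i, Measurable (Z i))
    (hdist : ∀ i, P.map (Z i) = G)
    (w : ℕ → ℝ) (hw : ∀ i, 0 ≤ w i) (hw1 : ∑' i, w i = 1)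
    (A : Set E) (hA : MeasurableSet A) :
    ∫ ω, randProb w Z A ω ∂P = (G A).toReal := by
  classical
  set p : ℝ := (G A).toReal with hp
  set X : ℕ → Ω → ℝ := fun i ω => Set.indicator A (fun _ => (1 : ℝ)) (Z i ω) with hX
  have hsw : Summable w := by
    by_contra h; rw [tsum_eq_zero_of_not_summable h] at hw1; norm_num at hw1
  have hindmeas : Measurable (Set.indicator A (fun _ => (1 : ℝ))) :=
    measurable_const.indicator hA
  have hXmeas : ∀ i, Measurable (X i) := fun i => hindmeas.comp (hZmeas i)
  have hX0 : ∀ i ω, 0 ≤ X i ω := fun i ω =>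
    Set.indicator_nonneg (fun _ _ => zero_le_one) _
  have hX1 : ∀ i ω, X i ω ≤ 1 := fun i ω => by
    simp only [hX, Set.indicator_apply]; split_ifs <;> norm_num
  have hEX : ∀ i, ∫ ω, X i ω ∂P = p := by
    intro i
    calc ∫ ω, X i ω ∂P
        = ∫ z, Set.indicator A (fun _ => (1 : ℝ)) z ∂(P.map (Z i)) :=
          (integral_map (hZmeas i).aemeasurable hindmeas.aestronglyMeasurable).symm
      _ = ∫ z, Set.indicator A (fun _ => (1 : ℝ)) z ∂G := by rw [hdist i]
      _ = p := integral_indicator_one hA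
  have h1 : ∫ ω, randProb w Z A ω ∂P = ∑' i, ∫ ω, w i * X i ω ∂P := by
    refine integral_tsum (fun i => ((hXmeas i).const_mul (w i)).aestronglyMeasurable) ?_
    refine aux_tsum_lint_ne_top hw hsw (fun i ω => ?_)
    rw [show w i * X i ω = w i * X i ω * 1 by ring]
    exact aux_nnnorm_le (hX0 i ω) (hX1 i ω) zero_le_one le_rfl
  rw [h1]
  simp_rw [integral_const_mul, hEX]
  rw [tsum_mul_right, hw1, one_mul]

end Mean

/-- For an i.i.d. sequence `Z₁, Z₂, …` with common distribution `G`, weight sequences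
`w, w'` of nonnegative reals summing to one, and a measurable `A` with `0 < G(A) < 1`,
the correlation `Cov(P_w(A), P_{w'}(A)) / √(Var(P_w(A))·Var(P_{w'}(A)))` equals
`Σᵢ wᵢw'ᵢ / √((Σᵢ wᵢ²)·(Σᵢ w'ᵢ²))`; in particular it does not depend on `A`. -/
theorem stmt8 {Ω E : Type*} [MeasurableSpace Ω] [MeasurableSpace E]
    (P : Measure Ω) [IsProbabilityMeasure P]
    (G : Measure E) [IsProbabilityMeasure G]
    (Z : ℕ → Ω → E) (hZmeas : ∀ i, Measurable (Z i))
    (hindep : iIndepFun Z P)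
    (hdist : ∀ i, P.map (Z i) = G)
    (w w' : ℕ → ℝ) (hw : ∀ i, 0 ≤ w i) (hw' : ∀ i, 0 ≤ w' i)
    (hw1 : ∑' i, w i = 1) (hw'1 : ∑' i, w' i = 1)
    (A : Set E) (hA : MeasurableSet A) (hA0 : 0 < G A) (hA1 : G A < 1) :
    ((∫ ω, randProb w Z A ω * randProb w' Z A ω ∂P) -
        (∫ ω, randProb w Z A ω ∂P) * (∫ ω, randProb w' Z A ω ∂P)) /
      Real.sqrt
        (((∫ ω, (randProb w Z A ω) ^ 2 ∂P) - (∫ ω, randProb w Z A ω ∂P) ^ 2) *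
          ((∫ ω, (randProb w' Z A ω) ^ 2 ∂P) - (∫ ω, randProb w' Z A ω ∂P) ^ 2)) =
      (∑' i, w i * w' i) /
        Real.sqrt ((∑' i, (w i) ^ 2) * (∑' i, (w' i) ^ 2)) := by
  set p : ℝ := (G A).toReal with hp
  have hp0 : 0 < p := ENNReal.toReal_pos hA0.ne' hA1.ne_top
  have hp1 : p < 1 := by
    have := (ENNReal.toReal_lt_toReal hA1.ne_top ENNReal.one_ne_top).mpr hA1
    simpa using this
  set c : ℝ := p - p ^ 2 with hc
  have hcpos : 0 < c := by rw [hc]; nlinarith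
  have hsq : ∀ (v : ℕ → ℝ), (∑' i, (v i) ^ 2) = ∑' i, v i * v i :=
    fun v => tsum_congr fun i => sq (v i)
  have hsqf : ∀ (v : ℕ → ℝ) (ω : Ω),
      (randProb v Z A ω) ^ 2 = randProb v Z A ω * randProb v Z A ω :=
    fun v ω => sq _
  rw [aux_cross P G Z hZmeas hindep hdist w w' hw hw' hw1 hw'1 A hA,
    aux_mean P G Z hZmeas hdist w hw hw1 A hA,
    aux_mean P G Z hZmeas hdist w' hw' hw'1 A hA]
  simp_rw [hsqf]
  rw [aux_cross P G Z hZmeas hindep hdist w w hw hw hw1 hw1 A hA,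
    aux_cross P G Z hZmeas hindep hdist w' w' hw' hw' hw'1 hw'1 A hA,
    hsq w, hsq w']
  rw [← hp, ← hc]
  have e1 : p ^ 2 + c * (∑' i, w i * w' i) - p * p = c * ∑' i, w i * w' i := by ring
  have e2 : p ^ 2 + c * (∑' i, w i * w i) - p ^ 2 = c * ∑' i, w i * w i := by ring
  have e3 : p ^ 2 + c * (∑' i, w' i * w' i) - p ^ 2 = c * ∑' i, w' i * w' i := by ring
  rw [e1, e2, e3]
  rw [show (c * ∑' i, w i * w i) * (c * ∑' i, w' i * w' i)
      = c ^ 2 * ((∑' i, w i * w i) * (∑' i, w' i * w' i)) by ring,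
    Real.sqrt_mul (sq_nonneg c), Real.sqrt_sq hcpos.le]
  rw [mul_div_mul_left _ _ hcpos.ne']
end

section
/- Let k ≥ 1 be an integer, μ ∈ ℝ, and s > 0. Set μ̂ = (μ + √(μ² + 8k·s²))/2 and ŝ² = (2k/μ̂² + 1/s²)^(−1). Then for every x > 0, 2k·log x − (x−μ)²/(2s²) + (x−μ̂)²/(2ŝ²) = V(x; k, μ̂) + 2k·log μ̂ − (μ̂−μ)²/(2s²), where V(x; k, μ̂) = 2k·[log(x/μ̂) − (x/μ̂ − 1) + (1/2)·(x/μ̂ − 1)²]. (This is the key identity of Appendix D: the log-ratio of the density proportional to x^(2k)·exp(−(x−μ)²/(2s²)) on (0,∞) to its Laplace Gaussian approximation N(μ̂, ŝ²) equals V(x; k, μ̂) plus a constant.) -/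
open Real

/-- `V(x; k, μ) = 2k·[log(x/μ) − (x/μ − 1) + (1/2)·(x/μ − 1)²]` for `x > 0`. -/
noncomputable def Vfun (k : ℕ) (μ x : ℝ) : ℝ :=
  2 * k * (Real.log (x / μ) - (x / μ - 1) + (1/2) * (x / μ - 1) ^ 2)

/-- For `k ≥ 1`, `μ ∈ ℝ`, `s > 0`, with `μ̂ = (μ + √(μ² + 8k·s²))/2` and
`ŝ² = (2k/μ̂² + 1/s²)⁻¹`, for every `x > 0`:
`2k·log x − (x−μ)²/(2s²) + (x−μ̂)²/(2ŝ²) = V(x; k, μ̂) + 2k·log μ̂ − (μ̂−μ)²/(2s²)`. -/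
theorem stmt11 (k : ℕ) (hk : 1 ≤ k) (μ s : ℝ) (hs : 0 < s)
    (μhat shat2 : ℝ)
    (hμhat : μhat = (μ + Real.sqrt (μ ^ 2 + 8 * k * s ^ 2)) / 2)
    (hshat2 : shat2 = (2 * k / μhat ^ 2 + 1 / s ^ 2)⁻¹) :
    ∀ x : ℝ, 0 < x →
      2 * k * Real.log x - (x - μ) ^ 2 / (2 * s ^ 2) + (x - μhat) ^ 2 / (2 * shat2) =
        Vfun k μhat x + 2 * k * Real.log μhat - (μhat - μ) ^ 2 / (2 * s ^ 2) := by
  intro x hx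
  have hk1 : (1:ℝ) ≤ (k:ℝ) := by exact_mod_cast hk
  have hD : (0:ℝ) < μ ^ 2 + 8 * k * s ^ 2 := by nlinarith [sq_nonneg μ, sq_nonneg s]
  have ht : Real.sqrt (μ ^ 2 + 8 * k * s ^ 2) ^ 2 = μ ^ 2 + 8 * k * s ^ 2 :=
    Real.sq_sqrt hD.le
  have htμ : -μ < Real.sqrt (μ ^ 2 + 8 * k * s ^ 2) := by
    nlinarith [Real.sqrt_nonneg (μ ^ 2 + 8 * k * s ^ 2), sq_nonneg s]
  have hμpos : 0 < μhat := by rw [hμhat]; linarith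
  have hroot : μhat ^ 2 = μ * μhat + 2 * k * s ^ 2 := by
    rw [hμhat]; nlinarith [ht]
  have hμne : μhat ≠ 0 := ne_of_gt hμpos
  have hsne : s ≠ 0 := ne_of_gt hs
  have hlog : Real.log (x / μhat) = Real.log x - Real.log μhat :=
    Real.log_div (ne_of_gt hx) hμne
  rw [Vfun, hlog, hshat2]
  have hden : 2 * k / μhat ^ 2 + 1 / s ^ 2 > 0 := by positivity
  rw [inv_eq_one_div]
  field_simp
  ring_nf
  linear_combination (-2 * μhat * (x - μhat)) * hroot
end
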